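/- arXiv:2211.04226 — 2 statements merged into one kernel-verified Lean document; each statement's English description precedes it below -/
import Mathlib

section
/- Let g₁,...,g_n : ℝ^d → ℝ be measurable and h_i(z) = ‖z − y'_i‖₂ for fixed vectors y'_i ∈ ℝ^d. Each h_i is 1-Lipschitz with respect to the ℓ² norm, and hence for any family F of functions from a set X to ℝ^d and any points x₁,...,x_n ∈ X, E_ξ[sup_{f∈F} ∑_{i=1}^n ξ_i h_i(f(x_i))] ≤ √2 · E_ξ[sup_{f∈F} ∑_{i=1}^n ∑_{k=1}^d ξ_{ik} f_k(x_i)], where ξ_i and ξ_{ik} are i.i.d. Rademacher signs. -/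
/-- The sign `+1`/`-1` associated to a Boolean. -/
def radSign (b : Bool) : ℝ := if b then 1 else -1

open scoped symmDiff

namespace VC

lemma radSign_not (b : Bool) : radSign (!b) = - radSign b := by
  cases b <;> simp [radSign]

lemma abs_radSign (b : Bool) : |radSign b| = 1 := by
  cases b <;> simp [radSign]

lemma radSign_mul_self (b : Bool) : radSign b * radSign b = 1 := by
  cases b <;> norm_num [radSign]

/-- flip one coordinate of a sign pattern -/
def flip1 {ι : Type*} [DecidableEq ι] (i : ι) (ε : ι → Bool) : ι → Bool :=
  Function.update ε i (!(ε i))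

lemma flip1_involutive {ι : Type*} [DecidableEq ι] (i : ι) :
    Function.Involutive (flip1 i) := by
  intro ε; funext j
  by_cases h : j = i
  · subst h; simp [flip1]
  · simp [flip1, Function.update_of_ne h]

lemma flip1_apply_self {ι : Type*} [DecidableEq ι] (i : ι) (ε : ι → Bool) :
    flip1 i ε i = !(ε i) := by simp [flip1]

lemma flip1_apply_ne {ι : Type*} [DecidableEq ι] (i : ι) (ε : ι → Bool) {j : ι} (h : j ≠ i) :
    flip1 i ε j = ε j := by simp [flip1, Function.update_of_ne h]

lemma sum_flip1 {ι : Type*} [DecidableEq ι] [Fintype ι] (i : ι) (g : (ι → Bool) → ℝ) :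
    ∑ ε : ι → Bool, g (flip1 i ε) = ∑ ε : ι → Bool, g ε :=
  Equiv.sum_comp ((flip1_involutive i).toPerm _) g

/-- negate all coordinates -/
def negE {ι : Type*} (ε : ι → Bool) : ι → Bool := fun k => !(ε k)

lemma negE_involutive {ι : Type*} : Function.Involutive (negE (ι := ι)) := by
  intro ε; funext k; simp [negE]

lemma sum_negE {ι : Type*} [DecidableEq ι] [Fintype ι] (g : (ι → Bool) → ℝ) :
    ∑ ε : ι → Bool, g (negE ε) = ∑ ε : ι → Bool, g ε :=
  Equiv.sum_comp ((negE_involutive (ι := ι)).toPerm _) g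

section Fourier

variable {d : ℕ}

/-- Walsh character -/
noncomputable def ww (S : Finset (Fin d)) (ε : Fin d → Bool) : ℝ := ∏ k ∈ S, radSign (ε k)

/-- Fourier coefficient -/
noncomputable def cc (f : (Fin d → Bool) → ℝ) (S : Finset (Fin d)) : ℝ :=
  ((2:ℝ)^d)⁻¹ * ∑ ε, f ε * ww S ε

lemma two_pow_ne (d : ℕ) : ((2:ℝ)^d) ≠ 0 := by positivity

lemma sum_const_cube (c : ℝ) : ∑ _ε : Fin d → Bool, c = (2:ℝ)^d * c := by
  rw [Finset.sum_const, Finset.card_univ]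
  simp [Fintype.card_fun, nsmul_eq_mul]

lemma ww_flip1_mem {S : Finset (Fin d)} {i : Fin d} (hi : i ∈ S) (ε : Fin d → Bool) :
    ww S (flip1 i ε) = - ww S ε := by
  unfold ww
  rw [← Finset.insert_erase hi, Finset.prod_insert (Finset.notMem_erase _ _),
    Finset.prod_insert (Finset.notMem_erase _ _), flip1_apply_self, radSign_not,
    Finset.prod_congr rfl (fun k hk => by
      rw [flip1_apply_ne i ε (Finset.ne_of_mem_erase hk)])]
  ring

lemma ww_flip1_not_mem {S : Finset (Fin d)} {i : Fin d} (hi : i ∉ S) (ε : Fin d → Bool) :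
    ww S (flip1 i ε) = ww S ε := by
  unfold ww
  exact Finset.prod_congr rfl (fun k hk => by
    rw [flip1_apply_ne i ε (fun h => hi (h ▸ hk))])

lemma sum_ww_eq_zero {U : Finset (Fin d)} (hU : U.Nonempty) :
    ∑ ε, ww U ε = 0 := by
  obtain ⟨i, hi⟩ := hU
  have h1 : ∑ ε, ww U (flip1 i ε) = ∑ ε, ww U ε := sum_flip1 i _
  have h2 : ∑ ε, ww U (flip1 i ε) = - ∑ ε, ww U ε := by
    rw [← Finset.sum_neg_distrib]
    exact Finset.sum_congr rfl (fun ε _ => ww_flip1_mem hi ε)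
  linarith [h1, h2.symm ▸ h1]

lemma ww_mul (S T : Finset (Fin d)) (ε : Fin d → Bool) :
    ww S ε * ww T ε = ww (S ∆ T) ε := by
  unfold ww
  have hS : ∏ k ∈ S, radSign (ε k)
      = (∏ k ∈ S \ T, radSign (ε k)) * ∏ k ∈ S ∩ T, radSign (ε k) := by
    rw [← Finset.prod_union (Finset.disjoint_sdiff_inter S T), Finset.sdiff_union_inter]
  have hT : ∏ k ∈ T, radSign (ε k)
      = (∏ k ∈ T \ S, radSign (ε k)) * ∏ k ∈ S ∩ T, radSign (ε k) := by
    rw [Finset.inter_comm, ← Finset.prod_union (Finset.disjoint_sdiff_inter T S),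
      Finset.sdiff_union_inter]
  have hsq : (∏ k ∈ S ∩ T, radSign (ε k)) * (∏ k ∈ S ∩ T, radSign (ε k)) = 1 := by
    rw [← Finset.prod_mul_distrib]
    exact Finset.prod_eq_one (fun k _ => radSign_mul_self _)
  have hsd : S ∆ T = (S \ T) ∪ (T \ S) := by
    rw [symmDiff_def, Finset.sup_eq_union]
  rw [hS, hT, hsd, Finset.prod_union disjoint_sdiff_sdiff]
  calc ((∏ k ∈ S \ T, radSign (ε k)) * ∏ k ∈ S ∩ T, radSign (ε k))
        * ((∏ k ∈ T \ S, radSign (ε k)) * ∏ k ∈ S ∩ T, radSign (ε k))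
      = ((∏ k ∈ S \ T, radSign (ε k)) * ∏ k ∈ T \ S, radSign (ε k))
        * ((∏ k ∈ S ∩ T, radSign (ε k)) * ∏ k ∈ S ∩ T, radSign (ε k)) := by ring
    _ = (∏ k ∈ S \ T, radSign (ε k)) * ∏ k ∈ T \ S, radSign (ε k) := by rw [hsq, mul_one]

lemma sum_ww_mul (S T : Finset (Fin d)) :
    ∑ ε, ww S ε * ww T ε = if S = T then (2:ℝ)^d else 0 := by
  by_cases h : S = T
  · subst h
    have : ∀ ε : Fin d → Bool, ww S ε * ww S ε = 1 := by
      intro ε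
      rw [ww_mul, symmDiff_self, Finset.bot_eq_empty]
      simp [ww]
    rw [Finset.sum_congr rfl (fun ε _ => this ε), sum_const_cube, mul_one]
    simp
  · rw [if_neg h]
    have hne : (S ∆ T).Nonempty := by
      rw [Finset.nonempty_iff_ne_empty]
      intro hc
      exact h (by rwa [← Finset.bot_eq_empty, symmDiff_eq_bot] at hc)
    rw [Finset.sum_congr rfl (fun ε _ => ww_mul S T ε)]
    exact sum_ww_eq_zero hne

lemma sum_ww_dual (ε δ : Fin d → Bool) :
    ∑ S : Finset (Fin d), ww S ε * ww S δ = if ε = δ then (2:ℝ)^d else 0 := by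
  have h1 : ∀ S : Finset (Fin d), ww S ε * ww S δ
      = ∏ k ∈ S, (radSign (ε k) * radSign (δ k)) := by
    intro S; rw [Finset.prod_mul_distrib]; rfl
  have h2 : ∑ S : Finset (Fin d), ww S ε * ww S δ
      = ∏ k, (radSign (ε k) * radSign (δ k) + 1) := by
    rw [Finset.prod_add]
    rw [← Finset.powerset_univ]
    refine (Finset.sum_congr rfl (fun S _ => ?_)).symm
    rw [Finset.prod_const_one, mul_one, ← h1]
  rw [h2]
  by_cases h : ε = δ
  · subst h
    rw [if_pos rfl]
    rw [Finset.prod_congr rfl (fun k _ => by rw [radSign_mul_self])]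
    norm_num
  · rw [if_neg h]
    have : ∃ k, ε k ≠ δ k := by
      by_contra hc
      push_neg at hc
      exact h (funext hc)
    obtain ⟨k, hk⟩ := this
    refine Finset.prod_eq_zero (Finset.mem_univ k) ?_
    cases hε : ε k <;> cases hδ : δ k <;>
      first
        | (exfalso; rw [hε, hδ] at hk; exact hk rfl)
        | norm_num [radSign]

lemma expansion (f : (Fin d → Bool) → ℝ) (ε : Fin d → Bool) :
    ∑ S : Finset (Fin d), cc f S * ww S ε = f ε := by
  unfold cc
  have h1 : ∀ S : Finset (Fin d),
      (((2:ℝ)^d)⁻¹ * ∑ δ, f δ * ww S δ) * ww S ε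
        = ∑ δ, ((2:ℝ)^d)⁻¹ * (f δ * (ww S δ * ww S ε)) := by
    intro S
    rw [Finset.mul_sum, Finset.sum_mul]
    exact Finset.sum_congr rfl (fun δ _ => by ring)
  rw [Finset.sum_congr rfl (fun S _ => h1 S), Finset.sum_comm]
  have h2 : ∀ δ, ∑ S : Finset (Fin d), ((2:ℝ)^d)⁻¹ * (f δ * (ww S δ * ww S ε))
      = ((2:ℝ)^d)⁻¹ * (f δ * (if δ = ε then (2:ℝ)^d else 0)) := by
    intro δ
    rw [← Finset.mul_sum, ← Finset.mul_sum, sum_ww_dual]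
  rw [Finset.sum_congr rfl (fun δ _ => h2 δ), ← Finset.mul_sum]
  have h3 : ∑ δ, f δ * (if δ = ε then (2:ℝ)^d else 0) = f ε * (2:ℝ)^d := by
    have h4 : ∀ δ, f δ * (if δ = ε then (2:ℝ)^d else 0)
        = if δ = ε then f δ * (2:ℝ)^d else 0 := by
      intro δ; split <;> simp
    rw [Finset.sum_congr rfl (fun δ _ => h4 δ), Finset.sum_ite_eq' Finset.univ ε]
    simp
  rw [h3]
  field_simp

lemma parseval (f : (Fin d → Bool) → ℝ) :
    ∑ S : Finset (Fin d), (cc f S)^2 = ((2:ℝ)^d)⁻¹ * ∑ ε, (f ε)^2 := by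
  have h1 : ∀ S : Finset (Fin d), (cc f S)^2
      = ∑ ε, ((2:ℝ)^d)⁻¹ * (f ε * (cc f S * ww S ε)) := by
    intro S
    have e1 : (cc f S)^2 = cc f S * (((2:ℝ)^d)⁻¹ * ∑ ε, f ε * ww S ε) := by
      rw [pow_two]; rfl
    rw [e1, Finset.mul_sum, Finset.mul_sum]
    exact Finset.sum_congr rfl (fun ε _ => by ring)
  rw [Finset.sum_congr rfl (fun S _ => h1 S), Finset.sum_comm]
  have h2 : ∀ ε, ∑ S : Finset (Fin d), ((2:ℝ)^d)⁻¹ * (f ε * (cc f S * ww S ε))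
      = ((2:ℝ)^d)⁻¹ * (f ε)^2 := by
    intro ε
    rw [← Finset.mul_sum, ← Finset.mul_sum, expansion, ← pow_two]
  rw [Finset.sum_congr rfl (fun ε _ => h2 ε), ← Finset.mul_sum]

end Fourier

section SzarekProof

variable {d : ℕ}

/-- the absolute value of the Rademacher sum, as a function on the discrete cube -/
noncomputable def fabs (u : Fin d → ℝ) : (Fin d → Bool) → ℝ :=
  fun ε => |∑ k, radSign (ε k) * u k|

lemma fabs_negE (u : Fin d → ℝ) (ε : Fin d → Bool) : fabs u (negE ε) = fabs u ε := by
  unfold fabs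
  have h : ∑ k, radSign (negE ε k) * u k = - ∑ k, radSign (ε k) * u k := by
    rw [← Finset.sum_neg_distrib]
    refine Finset.sum_congr rfl fun k _ => ?_
    show radSign (!(ε k)) * u k = -(radSign (ε k) * u k)
    rw [radSign_not]; ring
  rw [h, abs_neg]

lemma ww_negE (S : Finset (Fin d)) (ε : Fin d → Bool) :
    ww S (negE ε) = (-1)^S.card * ww S ε := by
  unfold ww
  rw [Finset.prod_congr rfl (fun k _ => show radSign (negE ε k) = -1 * radSign (ε k) by
    rw [show negE ε k = !(ε k) from rfl, radSign_not]; ring),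
    Finset.prod_mul_distrib, Finset.prod_const]

lemma cc_odd (u : Fin d → ℝ) {S : Finset (Fin d)} (h : ¬ Even S.card) :
    cc (fabs u) S = 0 := by
  have h1 : cc (fabs u) S = ((2:ℝ)^d)⁻¹ * ∑ ε, fabs u (negE ε) * ww S (negE ε) := by
    unfold cc
    rw [sum_negE (fun ε => fabs u ε * ww S ε)]
  have h2 : cc (fabs u) S = - cc (fabs u) S := by
    nth_rewrite 1 [h1]
    unfold cc
    rw [Finset.sum_congr rfl (fun ε (_ : ε ∈ Finset.univ) =>
      show fabs u (negE ε) * ww S (negE ε) = -(fabs u ε * ww S ε) from by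
        rw [fabs_negE, ww_negE, Odd.neg_one_pow (Nat.not_even_iff_odd.mp h)]
        ring)]
    rw [Finset.sum_neg_distrib]
    ring
  linarith

/-- discrete partial derivative of `fabs` -/
noncomputable def dfun (u : Fin d → ℝ) (i : Fin d) : (Fin d → Bool) → ℝ :=
  fun ε => (fabs u ε - fabs u (flip1 i ε)) / 2

lemma dfun_bound (u : Fin d → ℝ) (i : Fin d) (ε : Fin d → Bool) :
    |dfun u i ε| ≤ |u i| := by
  unfold dfun fabs
  have hd : (∑ k, radSign (ε k) * u k) - (∑ k, radSign (flip1 i ε k) * u k)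
      = 2 * (radSign (ε i) * u i) := by
    rw [← Finset.sum_sub_distrib]
    rw [Finset.sum_eq_single i (fun k _ hk => by rw [flip1_apply_ne i ε hk]; ring)
      (fun h => absurd (Finset.mem_univ i) h)]
    rw [flip1_apply_self, radSign_not]; ring
  set A := ∑ k, radSign (ε k) * u k
  set B := ∑ k, radSign (flip1 i ε k) * u k
  have habs : |(|A| - |B|) / 2| = |(|A| - |B|)| / 2 := by
    rw [abs_div]
    norm_num
  rw [habs]
  have hstep : |(|A| - |B|)| / 2 ≤ |A - B| / 2 := by
    have := abs_abs_sub_abs_le_abs_sub A B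
    linarith
  refine le_trans hstep (le_of_eq ?_)
  rw [hd, abs_mul, abs_mul, abs_radSign,
    show |(2:ℝ)| = 2 from abs_of_pos (by norm_num)]
  ring

lemma cc_dfun (u : Fin d → ℝ) (i : Fin d) (S : Finset (Fin d)) :
    cc (dfun u i) S = if i ∈ S then cc (fabs u) S else 0 := by
  have hflip : ∑ ε, fabs u (flip1 i ε) * ww S ε
      = ∑ ε, fabs u ε * ww S (flip1 i ε) := by
    calc ∑ ε, fabs u (flip1 i ε) * ww S ε
        = ∑ ε, fabs u (flip1 i (flip1 i ε)) * ww S (flip1 i ε) :=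
          (sum_flip1 i (fun ε => fabs u (flip1 i ε) * ww S ε)).symm
      _ = ∑ ε, fabs u ε * ww S (flip1 i ε) :=
          Finset.sum_congr rfl (fun ε _ => by rw [flip1_involutive i ε])
  have hsplit : ∀ c : ℝ, (∀ ε, ww S (flip1 i ε) = c * ww S ε) →
      ∑ ε, dfun u i ε * ww S ε = (1 - c)/2 * ∑ ε, fabs u ε * ww S ε := by
    intro c hc
    have e1 : ∑ ε, fabs u (flip1 i ε) * ww S ε = c * ∑ ε, fabs u ε * ww S ε := by
      rw [hflip, Finset.mul_sum]
      exact Finset.sum_congr rfl (fun ε _ => by rw [hc ε]; ring)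
    have e2 : ∑ ε, dfun u i ε * ww S ε
        = (∑ ε, fabs u ε * ww S ε - ∑ ε, fabs u (flip1 i ε) * ww S ε) / 2 := by
      rw [← Finset.sum_sub_distrib, Finset.sum_div]
      exact Finset.sum_congr rfl (fun ε _ => by unfold dfun; ring)
    rw [e2, e1]; ring
  by_cases h : i ∈ S
  · rw [if_pos h]
    have := hsplit (-1) (fun ε => by rw [ww_flip1_mem h]; ring)
    unfold cc
    rw [this]; ring
  · rw [if_neg h]
    have := hsplit 1 (fun ε => by rw [ww_flip1_not_mem h]; ring)
    unfold cc
    rw [this]; ring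

lemma sum_sq_mem (u : Fin d → ℝ) (i : Fin d) :
    ∑ S ∈ Finset.univ.filter (fun S : Finset (Fin d) => i ∈ S), (cc (fabs u) S)^2
      ≤ (u i)^2 := by
  have h1 : ∑ S ∈ Finset.univ.filter (fun S : Finset (Fin d) => i ∈ S), (cc (fabs u) S)^2
      = ∑ S : Finset (Fin d), (cc (dfun u i) S)^2 := by
    rw [Finset.sum_filter]
    exact Finset.sum_congr rfl (fun S _ => by rw [cc_dfun]; split <;> simp)
  rw [h1, parseval]
  have h2 : ∑ ε, (dfun u i ε)^2 ≤ (2:ℝ)^d * (u i)^2 := by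
    rw [← sum_const_cube ((u i)^2)]
    refine Finset.sum_le_sum (fun ε _ => ?_)
    have hb := dfun_bound u i ε
    calc (dfun u i ε)^2 = |dfun u i ε|^2 := (sq_abs _).symm
      _ ≤ |u i|^2 := by nlinarith [abs_nonneg (dfun u i ε)]
      _ = (u i)^2 := sq_abs _
  calc ((2:ℝ)^d)⁻¹ * ∑ ε, (dfun u i ε)^2
      ≤ ((2:ℝ)^d)⁻¹ * ((2:ℝ)^d * (u i)^2) := by
        exact mul_le_mul_of_nonneg_left h2 (by positivity)
    _ = (u i)^2 := by field_simp

lemma sum_sq_eq (u : Fin d → ℝ) :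
    ∑ S : Finset (Fin d), (cc (fabs u) S)^2 = ∑ k, u k ^ 2 := by
  rw [parseval]
  have habs : ∀ ε, (fabs u ε)^2 = (∑ k, radSign (ε k) * u k)^2 := fun ε => sq_abs _
  rw [Finset.sum_congr rfl (fun ε _ => habs ε)]
  have inner : ∀ j k : Fin d, (∑ ε : Fin d → Bool, radSign (ε j) * radSign (ε k))
      = if j = k then (2:ℝ)^d else 0 := by
    intro j k
    have h := sum_ww_mul ({j} : Finset (Fin d)) {k}
    simp only [ww, Finset.prod_singleton] at h
    rw [h]
    by_cases hjk : j = k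
    · rw [if_pos hjk, if_pos (by rw [hjk])]
    · rw [if_neg hjk, if_neg (by simpa using hjk)]
  have swap : ∑ ε : Fin d → Bool, (∑ k, radSign (ε k) * u k)^2
      = ∑ j, ∑ k, (u j * u k) * (∑ ε : Fin d → Bool, radSign (ε j) * radSign (ε k)) := by
    rw [Finset.sum_congr rfl (fun ε (_ : ε ∈ Finset.univ) => by
      rw [pow_two, Finset.sum_mul_sum])]
    rw [Finset.sum_comm]
    refine Finset.sum_congr rfl (fun j _ => ?_)
    rw [Finset.sum_comm]
    refine Finset.sum_congr rfl (fun k _ => ?_)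
    rw [Finset.mul_sum]
    exact Finset.sum_congr rfl (fun ε _ => by ring)
  rw [swap, Finset.sum_congr rfl (fun j (_ : j ∈ Finset.univ) =>
    Finset.sum_congr rfl (fun k _ => by rw [inner j k]))]
  have hdiag : ∀ j : Fin d, ∑ k, (u j * u k) * (if j = k then (2:ℝ)^d else 0)
      = (u j)^2 * (2:ℝ)^d := by
    intro j
    rw [Finset.sum_congr rfl (fun k _ => show (u j * u k) * (if j = k then (2:ℝ)^d else 0)
      = if j = k then (u j * u k) * (2:ℝ)^d else 0 from by split <;> simp)]
    rw [Finset.sum_ite_eq Finset.univ j (fun k => (u j * u k) * (2:ℝ)^d),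
      if_pos (Finset.mem_univ j)]
    ring
  rw [Finset.sum_congr rfl (fun j _ => hdiag j), ← Finset.sum_mul]
  field_simp

lemma cc_empty (u : Fin d → ℝ) :
    cc (fabs u) ∅ = ((2:ℝ)^d)⁻¹ * ∑ ε, fabs u ε := by
  unfold cc
  congr 1
  exact Finset.sum_congr rfl (fun ε _ => by simp [ww])

lemma cc_empty_nonneg (u : Fin d → ℝ) : 0 ≤ cc (fabs u) ∅ := by
  rw [cc_empty]
  have : 0 ≤ ∑ ε, fabs u ε := Finset.sum_nonneg (fun ε _ => abs_nonneg _)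
  positivity

lemma variance_bound (u : Fin d → ℝ) :
    ∑ k, u k ^ 2 ≤ 2 * (cc (fabs u) ∅)^2 := by
  set c : Finset (Fin d) → ℝ := cc (fabs u) with hc
  have hsplit : ∑ S : Finset (Fin d), (c S)^2
      = (c ∅)^2 + ∑ S ∈ Finset.univ.erase ∅, (c S)^2 :=
    (Finset.add_sum_erase _ _ (Finset.mem_univ ∅)).symm
  have hper : ∀ S ∈ Finset.univ.erase (∅ : Finset (Fin d)),
      (c S)^2 ≤ (2:ℝ)⁻¹ * ((S.card : ℝ) * (c S)^2) := by
    intro S hS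
    have hne : S ≠ ∅ := Finset.ne_of_mem_erase hS
    rcases Nat.lt_or_ge S.card 2 with h2 | h2
    · have h0 : S.card ≠ 0 := by simpa [Finset.card_eq_zero] using hne
      have h1 : S.card = 1 := by omega
      have hz : c S = 0 := cc_odd u (by rw [h1]; simp)
      rw [hz]; norm_num
    · have hcard2 : (2:ℝ) ≤ (S.card : ℝ) := by exact_mod_cast h2
      nlinarith [sq_nonneg (c S)]
  have hbound : ∑ S ∈ Finset.univ.erase (∅ : Finset (Fin d)), (c S)^2
      ≤ (2:ℝ)⁻¹ * ∑ S : Finset (Fin d), (S.card : ℝ) * (c S)^2 := by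
    calc ∑ S ∈ Finset.univ.erase (∅ : Finset (Fin d)), (c S)^2
        ≤ ∑ S ∈ Finset.univ.erase (∅ : Finset (Fin d)),
            (2:ℝ)⁻¹ * ((S.card : ℝ) * (c S)^2) := Finset.sum_le_sum hper
      _ ≤ ∑ S : Finset (Fin d), (2:ℝ)⁻¹ * ((S.card : ℝ) * (c S)^2) :=
          Finset.sum_le_sum_of_subset_of_nonneg (Finset.erase_subset _ _)
            (fun S _ _ => by positivity)
      _ = (2:ℝ)⁻¹ * ∑ S : Finset (Fin d), (S.card : ℝ) * (c S)^2 := by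
          rw [Finset.mul_sum]
  have hcount : ∑ S : Finset (Fin d), (S.card : ℝ) * (c S)^2
      = ∑ i, ∑ S ∈ Finset.univ.filter (fun S : Finset (Fin d) => i ∈ S), (c S)^2 := by
    have e1 : ∀ S : Finset (Fin d), (S.card : ℝ) * (c S)^2
        = ∑ i, (if i ∈ S then (c S)^2 else 0) := by
      intro S
      rw [← Finset.sum_filter]
      rw [show Finset.univ.filter (fun i => i ∈ S) = S from by ext i; simp]
      rw [Finset.sum_const, nsmul_eq_mul]
    rw [Finset.sum_congr rfl (fun S _ => e1 S), Finset.sum_comm]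
    exact Finset.sum_congr rfl (fun i _ => (Finset.sum_filter _ _).symm)
  have hderiv : ∑ i, ∑ S ∈ Finset.univ.filter (fun S : Finset (Fin d) => i ∈ S), (c S)^2
      ≤ ∑ i, (u i)^2 := Finset.sum_le_sum (fun i _ => sum_sq_mem u i)
  have htotal := sum_sq_eq u
  rw [hsplit] at htotal
  have : ∑ S ∈ Finset.univ.erase (∅ : Finset (Fin d)), (c S)^2
      ≤ (2:ℝ)⁻¹ * ∑ i, (u i)^2 := by
    calc ∑ S ∈ Finset.univ.erase (∅ : Finset (Fin d)), (c S)^2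
        ≤ (2:ℝ)⁻¹ * ∑ S : Finset (Fin d), (S.card : ℝ) * (c S)^2 := hbound
      _ = (2:ℝ)⁻¹ * ∑ i, ∑ S ∈ Finset.univ.filter
            (fun S : Finset (Fin d) => i ∈ S), (c S)^2 := by rw [hcount]
      _ ≤ (2:ℝ)⁻¹ * ∑ i, (u i)^2 :=
          mul_le_mul_of_nonneg_left hderiv (by norm_num)
  linarith

/-- Szarek's sharp L¹ Khintchine inequality. -/
theorem szarek (u : Fin d → ℝ) :
    Real.sqrt (∑ k, u k ^ 2)
      ≤ Real.sqrt 2 * (((2:ℝ)^d)⁻¹ * ∑ ε : Fin d → Bool, |∑ k, radSign (ε k) * u k|) := by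
  have h1 : Real.sqrt (∑ k, u k ^ 2) ≤ Real.sqrt (2 * (cc (fabs u) ∅)^2) :=
    Real.sqrt_le_sqrt (variance_bound u)
  have h2 : Real.sqrt (2 * (cc (fabs u) ∅)^2)
      = Real.sqrt 2 * cc (fabs u) ∅ := by
    rw [Real.sqrt_mul (by norm_num), Real.sqrt_sq (cc_empty_nonneg u)]
  rw [h2, cc_empty] at h1
  exact h1

end SzarekProof

section Machinery

lemma sum_update_mul {ι β : Type*} [Fintype ι] [DecidableEq ι] [Fintype β]
    (g : (ι → β) → ℝ) (i : ι) :
    ∑ t : ι → β, ∑ b : β, g (Function.update t i b)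
      = (Fintype.card β : ℝ) * ∑ t : ι → β, g t := by
  have hH : Function.Involutive
      (fun p : (ι → β) × β => (Function.update p.1 i p.2, p.1 i)) := by
    intro p
    refine Prod.ext ?_ ?_
    · show Function.update (Function.update p.1 i p.2) i (p.1 i) = p.1
      funext j
      by_cases h : j = i
      · subst h; simp
      · simp [Function.update_of_ne h]
    · show Function.update p.1 i p.2 i = p.2
      simp
  have h1 : ∑ p : (ι → β) × β, g (Function.update p.1 i p.2)
      = ∑ p : (ι → β) × β, g p.1 := by
    have := Equiv.sum_comp (hH.toPerm _) (fun p : (ι → β) × β => g p.1)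
    simpa using this
  have h2 : ∑ p : (ι → β) × β, g (Function.update p.1 i p.2)
      = ∑ t : ι → β, ∑ b : β, g (Function.update t i b) :=
    Fintype.sum_prod_type _
  have h3 : ∑ p : (ι → β) × β, g p.1 = ∑ t : ι → β, ∑ _b : β, g t :=
    Fintype.sum_prod_type _
  rw [← h2, h1, h3]
  rw [Finset.sum_congr rfl (fun t (_ : t ∈ Finset.univ) => by
    rw [Finset.sum_const, Finset.card_univ, nsmul_eq_mul])]
  rw [← Finset.mul_sum]

lemma avg_update {ι β : Type*} [Fintype ι] [DecidableEq ι] [Fintype β] [Nonempty β]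
    (g : (ι → β) → ℝ) (i : ι) :
    ∑ t : ι → β, g t
      = (Fintype.card β : ℝ)⁻¹ * ∑ t : ι → β, ∑ b : β, g (Function.update t i b) := by
  rw [sum_update_mul g i]
  have : (Fintype.card β : ℝ) ≠ 0 := by
    exact_mod_cast Fintype.card_ne_zero
  field_simp

lemma sSup_image_finite {α : Type*} {F : Set α} (hF : F.Finite) (hF' : F.Nonempty)
    (hne : hF.toFinset.Nonempty) (g : α → ℝ) :
    sSup (g '' F) = hF.toFinset.sup' hne g := by
  apply le_antisymm
  · refine csSup_le (hF'.image g) ?_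
    rintro y ⟨f, hf, rfl⟩
    exact Finset.le_sup' g (hF.mem_toFinset.mpr hf)
  · refine Finset.sup'_le _ _ (fun f hf => ?_)
    exact le_csSup (hF.image g).bddAbove ⟨f, hF.mem_toFinset.mp hf, rfl⟩

end Machinery

section Step

variable {α : Type*}

lemma step {Φ : Finset α} (hΦ : Φ.Nonempty) {d : ℕ}
    (A h : α → ℝ) (v : α → Fin d → ℝ)
    (hlip : ∀ p ∈ Φ, ∀ q ∈ Φ, h p - h q ≤ Real.sqrt (∑ k, (v p k - v q k)^2)) :
    (2:ℝ)⁻¹ * ∑ b : Bool, Φ.sup' hΦ (fun p => A p + radSign b * h p)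
      ≤ ((2:ℝ)^d)⁻¹ * ∑ τ : Fin d → Bool,
          Φ.sup' hΦ (fun p => A p + Real.sqrt 2 * ∑ k, radSign (τ k) * v p k) := by
  obtain ⟨p, hp, hpe⟩ := Finset.exists_mem_eq_sup' hΦ (fun r => A r + h r)
  obtain ⟨q, hq, hqe⟩ := Finset.exists_mem_eq_sup' hΦ (fun r => A r - h r)
  have hbool : ∑ b : Bool, Φ.sup' hΦ (fun r => A r + radSign b * h r)
      = Φ.sup' hΦ (fun r => A r + h r) + Φ.sup' hΦ (fun r => A r - h r) := by
    rw [Fintype.sum_bool]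
    congr 1
    · exact Finset.sup'_congr hΦ rfl (fun r _ => by norm_num [radSign])
    · exact Finset.sup'_congr hΦ rfl (fun r _ => by norm_num [radSign]; ring)
  -- per-τ lower bound on the pair of sups
  have key : ∀ τ : Fin d → Bool,
      A p + A q + Real.sqrt 2 * |∑ k, radSign (τ k) * (v p k - v q k)|
        ≤ Φ.sup' hΦ (fun r => A r + Real.sqrt 2 * ∑ k, radSign (τ k) * v r k)
          + Φ.sup' hΦ (fun r => A r - Real.sqrt 2 * ∑ k, radSign (τ k) * v r k) := by
    intro τ
    have hD : ∑ k, radSign (τ k) * (v p k - v q k)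
        = (∑ k, radSign (τ k) * v p k) - ∑ k, radSign (τ k) * v q k := by
      rw [← Finset.sum_sub_distrib]
      exact Finset.sum_congr rfl (fun k _ => by ring)
    have h1 := Finset.le_sup' (fun r => A r + Real.sqrt 2 * ∑ k, radSign (τ k) * v r k) hp
    have h2 := Finset.le_sup' (fun r => A r - Real.sqrt 2 * ∑ k, radSign (τ k) * v r k) hq
    have h3 := Finset.le_sup' (fun r => A r + Real.sqrt 2 * ∑ k, radSign (τ k) * v r k) hq
    have h4 := Finset.le_sup' (fun r => A r - Real.sqrt 2 * ∑ k, radSign (τ k) * v r k) hp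
    rcases abs_cases (∑ k, radSign (τ k) * (v p k - v q k)) with ⟨he, _⟩ | ⟨he, _⟩ <;>
      rw [he, hD] <;> nlinarith [Real.sqrt_nonneg 2]
  -- the two sups have equal τ-sums
  have hneg : ∀ τ : Fin d → Bool,
      Φ.sup' hΦ (fun r => A r - Real.sqrt 2 * ∑ k, radSign (τ k) * v r k)
        = Φ.sup' hΦ (fun r => A r + Real.sqrt 2 * ∑ k, radSign (negE τ k) * v r k) := by
    intro τ
    refine Finset.sup'_congr hΦ rfl (fun r _ => ?_)
    have : ∑ k, radSign (negE τ k) * v r k = - ∑ k, radSign (τ k) * v r k := by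
      rw [← Finset.sum_neg_distrib]
      refine Finset.sum_congr rfl (fun k _ => ?_)
      show radSign (!(τ k)) * v r k = -(radSign (τ k) * v r k)
      rw [radSign_not]; ring
    rw [this]; ring
  have hsum2 : ∑ τ : Fin d → Bool,
      Φ.sup' hΦ (fun r => A r - Real.sqrt 2 * ∑ k, radSign (τ k) * v r k)
        = ∑ τ : Fin d → Bool,
            Φ.sup' hΦ (fun r => A r + Real.sqrt 2 * ∑ k, radSign (τ k) * v r k) := by
    rw [Finset.sum_congr rfl (fun τ _ => hneg τ)]
    exact sum_negE (fun τ => Φ.sup' hΦ (fun r => A r + Real.sqrt 2 * ∑ k, radSign (τ k) * v r k))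
  -- Khintchine for the difference vector
  have hkh : Real.sqrt (∑ k, (v p k - v q k)^2)
      ≤ ((2:ℝ)^d)⁻¹ * ∑ τ : Fin d → Bool,
          Real.sqrt 2 * |∑ k, radSign (τ k) * (v p k - v q k)| := by
    have hs := szarek (fun k => v p k - v q k)
    calc Real.sqrt (∑ k, (v p k - v q k)^2)
        ≤ Real.sqrt 2 * (((2:ℝ)^d)⁻¹
            * ∑ τ : Fin d → Bool, |∑ k, radSign (τ k) * (v p k - v q k)|) := hs
      _ = ((2:ℝ)^d)⁻¹ * ∑ τ : Fin d → Bool,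
            Real.sqrt 2 * |∑ k, radSign (τ k) * (v p k - v q k)| := by
          simp only [Finset.mul_sum]
          exact Finset.sum_congr rfl (fun τ _ => by ring)
  -- assemble
  have hsum_lb : ∑ τ : Fin d → Bool,
        (A p + A q + Real.sqrt 2 * |∑ k, radSign (τ k) * (v p k - v q k)|)
      ≤ ∑ τ : Fin d → Bool,
          (Φ.sup' hΦ (fun r => A r + Real.sqrt 2 * ∑ k, radSign (τ k) * v r k)
            + Φ.sup' hΦ (fun r => A r - Real.sqrt 2 * ∑ k, radSign (τ k) * v r k)) :=
    Finset.sum_le_sum (fun τ _ => key τ)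
  have hconst : ∑ τ : Fin d → Bool,
        (A p + A q + Real.sqrt 2 * |∑ k, radSign (τ k) * (v p k - v q k)|)
      = (2:ℝ)^d * (A p + A q)
        + ∑ τ : Fin d → Bool, Real.sqrt 2 * |∑ k, radSign (τ k) * (v p k - v q k)| := by
    rw [Finset.sum_add_distrib, sum_const_cube]
  have hsplit2 : ∑ τ : Fin d → Bool,
        (Φ.sup' hΦ (fun r => A r + Real.sqrt 2 * ∑ k, radSign (τ k) * v r k)
          + Φ.sup' hΦ (fun r => A r - Real.sqrt 2 * ∑ k, radSign (τ k) * v r k))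
      = 2 * ∑ τ : Fin d → Bool,
          Φ.sup' hΦ (fun r => A r + Real.sqrt 2 * ∑ k, radSign (τ k) * v r k) := by
    rw [Finset.sum_add_distrib, hsum2]; ring
  have hlippq := hlip p hp q hq
  have hpow : (0:ℝ) < (2:ℝ)^d := by positivity
  -- final chain
  rw [hbool, hpe, hqe]
  have hmain : (2:ℝ)^d * ((A p + h p) + (A q - h q))
      ≤ 2 * ((2:ℝ)^d * ((2:ℝ)^d)⁻¹ * ∑ τ : Fin d → Bool,
          Φ.sup' hΦ (fun r => A r + Real.sqrt 2 * ∑ k, radSign (τ k) * v r k)) := by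
    have e1 : (2:ℝ)^d * ((2:ℝ)^d)⁻¹ = 1 := by field_simp
    rw [e1]
    have c1 : (2:ℝ)^d * ((A p + h p) + (A q - h q))
        ≤ (2:ℝ)^d * ((A p + A q) + Real.sqrt (∑ k, (v p k - v q k)^2)) := by
      have : (A p + h p) + (A q - h q) ≤ (A p + A q) + Real.sqrt (∑ k, (v p k - v q k)^2) := by
        linarith
      exact mul_le_mul_of_nonneg_left this (le_of_lt hpow)
    have c2 : (2:ℝ)^d * ((A p + A q) + Real.sqrt (∑ k, (v p k - v q k)^2))
        ≤ (2:ℝ)^d * (A p + A q)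
          + ∑ τ : Fin d → Bool, Real.sqrt 2 * |∑ k, radSign (τ k) * (v p k - v q k)| := by
      have := mul_le_mul_of_nonneg_left hkh (le_of_lt hpow)
      have e2 : (2:ℝ)^d * (((2:ℝ)^d)⁻¹ * ∑ τ : Fin d → Bool,
          Real.sqrt 2 * |∑ k, radSign (τ k) * (v p k - v q k)|)
          = ∑ τ : Fin d → Bool, Real.sqrt 2 * |∑ k, radSign (τ k) * (v p k - v q k)| := by
        rw [← mul_assoc, e1, one_mul]
      rw [e2] at this
      nlinarith [this]
    calc (2:ℝ)^d * ((A p + h p) + (A q - h q))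
        ≤ (2:ℝ)^d * (A p + A q)
          + ∑ τ : Fin d → Bool, Real.sqrt 2 * |∑ k, radSign (τ k) * (v p k - v q k)| :=
          le_trans c1 c2
      _ = ∑ τ : Fin d → Bool,
            (A p + A q + Real.sqrt 2 * |∑ k, radSign (τ k) * (v p k - v q k)|) := hconst.symm
      _ ≤ ∑ τ : Fin d → Bool,
            (Φ.sup' hΦ (fun r => A r + Real.sqrt 2 * ∑ k, radSign (τ k) * v r k)
              + Φ.sup' hΦ (fun r => A r - Real.sqrt 2 * ∑ k, radSign (τ k) * v r k)) := hsum_lb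
      _ = 2 * (1 * ∑ τ : Fin d → Bool,
            Φ.sup' hΦ (fun r => A r + Real.sqrt 2 * ∑ k, radSign (τ k) * v r k)) := by
          rw [hsplit2, one_mul]
  -- divide by 2 * 2^d
  have hstep2 := mul_le_mul_of_nonneg_left hmain (le_of_lt (inv_pos.mpr hpow))
  have e3 : ((2:ℝ)^d)⁻¹ * ((2:ℝ)^d * ((A p + h p) + (A q - h q)))
      = (A p + h p) + (A q - h q) := by field_simp
  have e4 : ((2:ℝ)^d)⁻¹ * (2 * ((2:ℝ)^d * ((2:ℝ)^d)⁻¹ * ∑ τ : Fin d → Bool,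
        Φ.sup' hΦ (fun r => A r + Real.sqrt 2 * ∑ k, radSign (τ k) * v r k)))
      = 2 * (((2:ℝ)^d)⁻¹ * ((2:ℝ)^d * ((2:ℝ)^d)⁻¹ * ∑ τ : Fin d → Bool,
        Φ.sup' hΦ (fun r => A r + Real.sqrt 2 * ∑ k, radSign (τ k) * v r k))) := by ring
  rw [e3, e4] at hstep2
  have e5 : (2:ℝ)^d * ((2:ℝ)^d)⁻¹ = 1 := by field_simp
  rw [e5, one_mul] at hstep2
  linarith

end Step

section RevTriangle

lemma norm_eq_sqrt_sum {d : ℕ} (w : Fin d → ℝ) :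
    ‖(WithLp.equiv 2 (Fin d → ℝ)).symm w‖ = Real.sqrt (∑ k, (w k)^2) := by
  rw [EuclideanSpace.norm_eq]
  congr 1
  refine Finset.sum_congr rfl (fun k _ => ?_)
  rw [show ((WithLp.equiv 2 (Fin d → ℝ)).symm w).ofLp k = w k from rfl, Real.norm_eq_abs, sq_abs]

lemma rev_triangle {d : ℕ} (z z' y : Fin d → ℝ) :
    |Real.sqrt (∑ k, (z k - y k)^2) - Real.sqrt (∑ k, (z' k - y k)^2)|
      ≤ Real.sqrt (∑ k, (z k - z' k)^2) := by
  set Z : EuclideanSpace ℝ (Fin d) := (WithLp.equiv 2 (Fin d → ℝ)).symm (fun k => z k - y k)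
    with hZ
  set Z' : EuclideanSpace ℝ (Fin d) := (WithLp.equiv 2 (Fin d → ℝ)).symm (fun k => z' k - y k)
    with hZ'
  have hsub : Z - Z' = (WithLp.equiv 2 (Fin d → ℝ)).symm
      (fun k => (z k - y k) - (z' k - y k)) := rfl
  have h := abs_norm_sub_norm_le Z Z'
  rw [hZ, hZ', hsub, norm_eq_sqrt_sum, norm_eq_sqrt_sum, norm_eq_sqrt_sum] at h
  have e : ∑ k, ((z k - y k) - (z' k - y k))^2 = ∑ k, (z k - z' k)^2 :=
    Finset.sum_congr rfl (fun k _ => by ring_nf)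
  rwa [e] at h

end RevTriangle

section Main

variable {α : Type*} {n d : ℕ}

/-- the interpolating quantity: signs on indices outside `K` multiply the Lipschitz images,
indices inside `K` have been replaced by `√2` times coordinatewise Rademacher sums. -/
noncomputable def QQ (Φ : Finset α) (hΦ : Φ.Nonempty) (H : Fin n → α → ℝ)
    (V : Fin n → α → Fin d → ℝ) (K : Finset (Fin n)) : ℝ :=
  ((2:ℝ)^n)⁻¹ * (((2:ℝ)^(n*d))⁻¹ * ∑ s : Fin n → Bool, ∑ t : Fin n → Fin d → Bool,
    Φ.sup' hΦ (fun p => (∑ i ∈ Kᶜ, radSign (s i) * H i p)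
      + Real.sqrt 2 * ∑ i ∈ K, ∑ k, radSign (t i k) * V i p k))

lemma card_cube_real (m : ℕ) : ((Fintype.card (Fin m → Bool) : ℝ)) = (2:ℝ)^m := by
  rw [Fintype.card_fun, Fintype.card_bool, Fintype.card_fin]
  push_cast
  ring

lemma card_cube2_real : ((Fintype.card (Fin n → Fin d → Bool) : ℝ)) = (2:ℝ)^(n*d) := by
  rw [Fintype.card_fun, Fintype.card_fun, Fintype.card_bool, Fintype.card_fin,
    Fintype.card_fin]
  push_cast
  rw [← pow_mul, Nat.mul_comm d n]

lemma QQ_le_insert (Φ : Finset α) (hΦ : Φ.Nonempty) (H : Fin n → α → ℝ)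
    (V : Fin n → α → Fin d → ℝ)
    (hlip : ∀ i : Fin n, ∀ p ∈ Φ, ∀ q ∈ Φ,
      H i p - H i q ≤ Real.sqrt (∑ k, (V i p k - V i q k)^2))
    (K : Finset (Fin n)) (i₀ : Fin n) (hi₀ : i₀ ∉ K) :
    QQ Φ hΦ H V K ≤ QQ Φ hΦ H V (insert i₀ K) := by
  classical
  set G : (Fin n → Bool) → (Fin n → Fin d → Bool) → ℝ := fun s t =>
    Φ.sup' hΦ (fun p => (∑ i ∈ Kᶜ, radSign (s i) * H i p)
      + Real.sqrt 2 * ∑ i ∈ K, ∑ k, radSign (t i k) * V i p k) with hG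
  set G' : (Fin n → Bool) → (Fin n → Fin d → Bool) → ℝ := fun s t =>
    Φ.sup' hΦ (fun p => (∑ i ∈ (insert i₀ K)ᶜ, radSign (s i) * H i p)
      + Real.sqrt 2 * ∑ i ∈ insert i₀ K, ∑ k, radSign (t i k) * V i p k) with hG'
  have hi₀c : i₀ ∈ Kᶜ := Finset.mem_compl.mpr hi₀
  -- pointwise step inequality
  have hpt : ∀ (s : Fin n → Bool) (t : Fin n → Fin d → Bool),
      (2:ℝ)⁻¹ * ∑ b : Bool, G (Function.update s i₀ b) t
        ≤ ((2:ℝ)^d)⁻¹ * ∑ τ : Fin d → Bool, G' s (Function.update t i₀ τ) := by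
    intro s t
    set A : α → ℝ := fun p => (∑ i ∈ Kᶜ.erase i₀, radSign (s i) * H i p)
      + Real.sqrt 2 * ∑ i ∈ K, ∑ k, radSign (t i k) * V i p k with hA
    have hGb : ∀ b : Bool, G (Function.update s i₀ b) t
        = Φ.sup' hΦ (fun p => A p + radSign b * H i₀ p) := by
      intro b
      rw [hG]
      refine Finset.sup'_congr hΦ rfl (fun p _ => ?_)
      have e1 : ∑ i ∈ Kᶜ, radSign (Function.update s i₀ b i) * H i p
          = radSign b * H i₀ p
            + ∑ i ∈ Kᶜ.erase i₀, radSign (s i) * H i p := by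
        rw [← Finset.add_sum_erase _ _ hi₀c, Function.update_self]
        congr 1
        refine Finset.sum_congr rfl (fun i hi => ?_)
        rw [Function.update_of_ne (Finset.ne_of_mem_erase hi)]
      rw [e1, hA]
      ring
    have hG't : ∀ τ : Fin d → Bool, G' s (Function.update t i₀ τ)
        = Φ.sup' hΦ (fun p => A p + Real.sqrt 2 * ∑ k, radSign (τ k) * V i₀ p k) := by
      intro τ
      rw [hG']
      refine Finset.sup'_congr hΦ rfl (fun p _ => ?_)
      have e2 : ∑ i ∈ insert i₀ K, ∑ k, radSign (Function.update t i₀ τ i k) * V i p k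
          = (∑ k, radSign (τ k) * V i₀ p k)
            + ∑ i ∈ K, ∑ k, radSign (t i k) * V i p k := by
        rw [Finset.sum_insert hi₀, Function.update_self]
        congr 1
        refine Finset.sum_congr rfl (fun i hi => ?_)
        rw [Function.update_of_ne (fun (h : i = i₀) => hi₀ (h ▸ hi))]
      rw [e2, Finset.compl_insert, hA]
      ring
    rw [Finset.sum_congr rfl (fun b _ => hGb b),
      Finset.sum_congr rfl (fun τ _ => hG't τ)]
    exact step hΦ A (H i₀) (V i₀) (hlip i₀)
  -- averaged identities
  have eL : ∑ s : Fin n → Bool, ∑ t : Fin n → Fin d → Bool, G s t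
      = (2:ℝ)⁻¹ * ∑ s : Fin n → Bool, ∑ t : Fin n → Fin d → Bool,
          ∑ b : Bool, G (Function.update s i₀ b) t := by
    have h1 : ∀ t : Fin n → Fin d → Bool, ∑ s : Fin n → Bool, G s t
        = (2:ℝ)⁻¹ * ∑ s : Fin n → Bool, ∑ b : Bool, G (Function.update s i₀ b) t := by
      intro t
      rw [avg_update (fun s => G s t) i₀, Fintype.card_bool]
      norm_num
    rw [Finset.sum_comm, Finset.sum_congr rfl (fun t _ => h1 t), ← Finset.mul_sum,
      Finset.sum_comm]
  have eR : ∑ s : Fin n → Bool, ∑ t : Fin n → Fin d → Bool, G' s t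
      = ((2:ℝ)^d)⁻¹ * ∑ s : Fin n → Bool, ∑ t : Fin n → Fin d → Bool,
          ∑ τ : Fin d → Bool, G' s (Function.update t i₀ τ) := by
    have h2 : ∀ s : Fin n → Bool, ∑ t : Fin n → Fin d → Bool, G' s t
        = ((2:ℝ)^d)⁻¹ * ∑ t : Fin n → Fin d → Bool,
            ∑ τ : Fin d → Bool, G' s (Function.update t i₀ τ) := by
      intro s
      rw [avg_update (fun t => G' s t) i₀, card_cube_real d]
    rw [Finset.sum_congr rfl (fun s _ => h2 s), ← Finset.mul_sum]
  -- combine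
  have hsums : ∑ s : Fin n → Bool, ∑ t : Fin n → Fin d → Bool, G s t
      ≤ ∑ s : Fin n → Bool, ∑ t : Fin n → Fin d → Bool, G' s t := by
    rw [eL, eR, Finset.mul_sum, Finset.mul_sum]
    refine Finset.sum_le_sum (fun s _ => ?_)
    rw [Finset.mul_sum, Finset.mul_sum]
    refine Finset.sum_le_sum (fun t _ => ?_)
    exact hpt s t
  unfold QQ
  refine mul_le_mul_of_nonneg_left ?_ (by positivity)
  exact mul_le_mul_of_nonneg_left hsums (by positivity)

lemma QQ_empty_le (Φ : Finset α) (hΦ : Φ.Nonempty) (H : Fin n → α → ℝ)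
    (V : Fin n → α → Fin d → ℝ)
    (hlip : ∀ i : Fin n, ∀ p ∈ Φ, ∀ q ∈ Φ,
      H i p - H i q ≤ Real.sqrt (∑ k, (V i p k - V i q k)^2))
    (K : Finset (Fin n)) :
    QQ Φ hΦ H V ∅ ≤ QQ Φ hΦ H V K := by
  classical
  induction K using Finset.induction_on with
  | empty => exact le_refl _
  | insert _ _ hx ih => exact le_trans ih (QQ_le_insert Φ hΦ H V hlip _ _ hx)

lemma sup'_const_mul {Φ : Finset α} (hΦ : Φ.Nonempty) (g : α → ℝ) {c : ℝ} (hc : 0 ≤ c) :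
    Φ.sup' hΦ (fun p => c * g p) = c * Φ.sup' hΦ g := by
  exact (Finset.comp_sup'_eq_sup'_comp hΦ (fun x => c * x)
    (fun x y => mul_max_of_nonneg x y hc)).symm

lemma QQ_empty (Φ : Finset α) (hΦ : Φ.Nonempty) (H : Fin n → α → ℝ)
    (V : Fin n → α → Fin d → ℝ) :
    QQ Φ hΦ H V ∅
      = ((2:ℝ)^n)⁻¹ * ∑ s : Fin n → Bool,
          Φ.sup' hΦ (fun p => ∑ i, radSign (s i) * H i p) := by
  unfold QQ
  congr 1
  have h1 : ∀ (s : Fin n → Bool) (_t : Fin n → Fin d → Bool),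
      Φ.sup' hΦ (fun p => (∑ i ∈ (∅ : Finset (Fin n))ᶜ, radSign (s i) * H i p)
        + Real.sqrt 2 * ∑ i ∈ (∅ : Finset (Fin n)), ∑ k, radSign (_t i k) * V i p k)
      = Φ.sup' hΦ (fun p => ∑ i, radSign (s i) * H i p) := by
    intro s t
    refine Finset.sup'_congr hΦ rfl (fun p _ => ?_)
    rw [Finset.compl_empty, Finset.sum_empty, mul_zero, add_zero]
  have h2 : ∀ s : Fin n → Bool,
      ∑ _t : Fin n → Fin d → Bool,
        Φ.sup' hΦ (fun p => ∑ i, radSign (s i) * H i p)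
      = (2:ℝ)^(n*d) * Φ.sup' hΦ (fun p => ∑ i, radSign (s i) * H i p) := by
    intro s
    rw [Finset.sum_const, Finset.card_univ, nsmul_eq_mul, card_cube2_real]
  rw [Finset.sum_congr rfl (fun s _ =>
    Finset.sum_congr rfl (fun t _ => h1 s t))]
  rw [Finset.sum_congr rfl (fun s _ => h2 s), ← Finset.mul_sum, ← mul_assoc,
    inv_mul_cancel₀ (by positivity : ((2:ℝ)^(n*d)) ≠ 0), one_mul]

lemma QQ_univ (Φ : Finset α) (hΦ : Φ.Nonempty) (H : Fin n → α → ℝ)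
    (V : Fin n → α → Fin d → ℝ) :
    QQ Φ hΦ H V Finset.univ
      = Real.sqrt 2 * (((2:ℝ)^(n*d))⁻¹ * ∑ t : Fin n → Fin d → Bool,
          Φ.sup' hΦ (fun p => ∑ i, ∑ k, radSign (t i k) * V i p k)) := by
  unfold QQ
  have h1 : ∀ (s : Fin n → Bool) (t : Fin n → Fin d → Bool),
      Φ.sup' hΦ (fun p => (∑ i ∈ (Finset.univ : Finset (Fin n))ᶜ, radSign (s i) * H i p)
        + Real.sqrt 2 * ∑ i ∈ (Finset.univ : Finset (Fin n)), ∑ k, radSign (t i k) * V i p k)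
      = Real.sqrt 2 * Φ.sup' hΦ (fun p => ∑ i, ∑ k, radSign (t i k) * V i p k) := by
    intro s t
    rw [← sup'_const_mul hΦ _ (Real.sqrt_nonneg 2)]
    refine Finset.sup'_congr hΦ rfl (fun p _ => ?_)
    rw [Finset.compl_univ, Finset.sum_empty, zero_add]
  rw [Finset.sum_congr rfl (fun s (_ : s ∈ Finset.univ) =>
    Finset.sum_congr rfl (fun t _ => h1 s t))]
  have h2 : ∑ _s : Fin n → Bool, ∑ t : Fin n → Fin d → Bool,
      Real.sqrt 2 * Φ.sup' hΦ (fun p => ∑ i, ∑ k, radSign (t i k) * V i p k)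
      = (2:ℝ)^n * ∑ t : Fin n → Fin d → Bool,
          Real.sqrt 2 * Φ.sup' hΦ (fun p => ∑ i, ∑ k, radSign (t i k) * V i p k) := by
    rw [Finset.sum_const, Finset.card_univ, nsmul_eq_mul, card_cube_real n]
  rw [h2]
  have h3 : ∑ t : Fin n → Fin d → Bool,
      Real.sqrt 2 * Φ.sup' hΦ (fun p => ∑ i, ∑ k, radSign (t i k) * V i p k)
      = Real.sqrt 2 * ∑ t : Fin n → Fin d → Bool,
          Φ.sup' hΦ (fun p => ∑ i, ∑ k, radSign (t i k) * V i p k) :=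
    (Finset.mul_sum _ _ _).symm
  rw [h3]
  have hn0 : ((2:ℝ)^n) ≠ 0 := by positivity
  field_simp

end Main

end VC

open VC in
/-- Vector-valued Rademacher contraction (Maurer): each `hᵢ(z) = ‖z − y'ᵢ‖₂` is
1-Lipschitz for the ℓ² norm, and the Rademacher average of `hᵢ ∘ f` over a family `F`
of `ℝ^d`-valued functions is bounded by `√2` times the doubly-indexed coordinatewise
Rademacher average. Expectations over i.i.d. uniform signs are written as averages
over all sign patterns. -/
theorem vector_contraction
    {X : Type*} (d n : ℕ) (y' : Fin n → Fin d → ℝ)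
    (F : Set (X → Fin d → ℝ)) (hF : F.Finite) (hF' : F.Nonempty)
    (x : Fin n → X) :
    (∀ i : Fin n, ∀ z z' : Fin d → ℝ,
        |Real.sqrt (∑ k, (z k - y' i k) ^ 2) - Real.sqrt (∑ k, (z' k - y' i k) ^ 2)|
          ≤ Real.sqrt (∑ k, (z k - z' k) ^ 2)) ∧
    (1 / (2 : ℝ) ^ n) *
        ∑ s : Fin n → Bool,
          sSup ((fun f : X → Fin d → ℝ =>
            ∑ i, radSign (s i) * Real.sqrt (∑ k, (f (x i) k - y' i k) ^ 2)) '' F)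
      ≤ Real.sqrt 2 *
        ((1 / (2 : ℝ) ^ (n * d)) *
          ∑ t : Fin n → Fin d → Bool,
            sSup ((fun f : X → Fin d → ℝ =>
              ∑ i, ∑ k, radSign (t i k) * f (x i) k) '' F)) := by
  classical
  refine ⟨fun i z z' => rev_triangle z z' (y' i), ?_⟩
  set Φ : Finset (X → Fin d → ℝ) := hF.toFinset with hΦdef
  have hne : Φ.Nonempty := by
    rw [hΦdef, Set.Finite.toFinset_nonempty]
    exact hF'
  set H : Fin n → (X → Fin d → ℝ) → ℝ :=
    fun i f => Real.sqrt (∑ k, (f (x i) k - y' i k)^2) with hH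
  set V : Fin n → (X → Fin d → ℝ) → Fin d → ℝ := fun i f k => f (x i) k with hV
  have hlip : ∀ i : Fin n, ∀ p ∈ Φ, ∀ q ∈ Φ,
      H i p - H i q ≤ Real.sqrt (∑ k, (V i p k - V i q k)^2) := by
    intro i p _ q _
    have h := rev_triangle (p (x i)) (q (x i)) (y' i)
    have h2 := le_trans (le_abs_self _) h
    exact h2
  have hLHS : (1 / (2 : ℝ) ^ n) *
        ∑ s : Fin n → Bool,
          sSup ((fun f : X → Fin d → ℝ =>
            ∑ i, radSign (s i) * Real.sqrt (∑ k, (f (x i) k - y' i k) ^ 2)) '' F)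
      = QQ Φ hne H V ∅ := by
    rw [QQ_empty, one_div]
    congr 1
    refine Finset.sum_congr rfl (fun s _ => ?_)
    exact sSup_image_finite hF hF' hne _
  have hRHS : Real.sqrt 2 *
        ((1 / (2 : ℝ) ^ (n * d)) *
          ∑ t : Fin n → Fin d → Bool,
            sSup ((fun f : X → Fin d → ℝ =>
              ∑ i, ∑ k, radSign (t i k) * f (x i) k) '' F))
      = QQ Φ hne H V Finset.univ := by
    rw [QQ_univ, one_div]
    congr 2
    refine Finset.sum_congr rfl (fun t _ => ?_)
    exact sSup_image_finite hF hF' hne _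
  rw [hLHS, hRHS]
  exact QQ_empty_le Φ hne H V hlip Finset.univ
end

section
/- Let S = {x₁,...,x_n} ⊆ ℝ^d with ‖x_i‖_∞ ≤ 1, and let F_Q = {x ↦ ∑_{k=1}^m a_k σ(w_kᵀx) : ∑_k |a_k|‖w_k‖₁ ≤ Q} be two-layer ReLU networks with path norm at most Q. Then the empirical Rademacher complexity satisfies R_n(F_Q ∘ S) ≤ 2Q √(2 ln(2d)/n). -/
open Finset


lemma radSign_not (b : Bool) : radSign (!b) = - radSign b := by cases b <;> simp [radSign]
lemma radSign_abs (b : Bool) : |radSign b| = 1 := by cases b <;> simp [radSign]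
lemma radSign_choice (b : Bool) : radSign b = 1 ∨ radSign b = -1 := by cases b <;> simp [radSign]

lemma bdd_of_le {P : Type*} (f : P → ℝ) (D : ℝ) (h : ∀ p, f p ≤ D) :
    BddAbove (Set.range f) := ⟨D, by rintro _ ⟨p, rfl⟩; exact h p⟩

lemma sup_add_sup_le {P : Type*} [Nonempty P] (B u : P → ℝ) (ε : ℝ) (hε : ε = 1 ∨ ε = -1)
    (φ : ℝ → ℝ) (hφ : ∀ a b, |φ a - φ b| ≤ |a - b|)
    (h1 : BddAbove (Set.range fun p => B p + ε * u p))
    (h2 : BddAbove (Set.range fun p => B p - ε * u p)) :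
    (⨆ p, (B p + ε * φ (u p))) + (⨆ p, (B p - ε * φ (u p)))
      ≤ (⨆ p, (B p + ε * u p)) + (⨆ p, (B p - ε * u p)) := by
  set S1 := ⨆ p, (B p + ε * u p) with hS1
  set S2 := ⨆ p, (B p - ε * u p) with hS2
  have key : ∀ p q, (B p + ε * φ (u p)) + (B q - ε * φ (u q)) ≤ S1 + S2 := by
    intro p q
    have h1p := le_ciSup h1 p
    have h1q := le_ciSup h1 q
    have h2p := le_ciSup h2 p
    have h2q := le_ciSup h2 q
    simp only [← hS1, ← hS2] at *
    have hlip : ε * (φ (u p) - φ (u q)) ≤ |u p - u q| := by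
      calc ε * (φ (u p) - φ (u q)) ≤ |ε * (φ (u p) - φ (u q))| := le_abs_self _
        _ = |φ (u p) - φ (u q)| := by rcases hε with h | h <;> simp [h, abs_mul, abs_sub_comm]
        _ ≤ |u p - u q| := hφ _ _
    rcases le_total (u q) (u p) with hle | hle
    · rw [abs_of_nonneg (by linarith)] at hlip
      rcases hε with h | h <;> subst h <;> linarith
    · rw [abs_of_nonpos (by linarith)] at hlip
      rcases hε with h | h <;> subst h <;> linarith
  have h2' : ∀ p, (⨆ q, (B q - ε * φ (u q))) ≤ S1 + S2 - (B p + ε * φ (u p)) := by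
    intro p
    exact ciSup_le fun q => by linarith [key p q]
  have h1' : (⨆ p, (B p + ε * φ (u p))) ≤ S1 + S2 - (⨆ q, (B q - ε * φ (u q))) :=
    ciSup_le fun p => by linarith [h2' p]
  linarith

lemma contraction {n : ℕ} {P : Type*} [Nonempty P]
    (t : Fin n → P → ℝ) (ht : ∀ i p, |t i p| ≤ 1)
    (φ : ℝ → ℝ) (hφ0 : φ 0 = 0) (hφ : ∀ a b, |φ a - φ b| ≤ |a - b|) :
    ∑ s : Fin n → Bool, (⨆ p, ∑ i, radSign (s i) * φ (t i p))
      ≤ ∑ s : Fin n → Bool, (⨆ p, ∑ i, radSign (s i) * t i p) := by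
  classical
  set g : Finset (Fin n) → (Fin n → Bool) → P → ℝ :=
    fun T s p => ∑ i, radSign (s i) * (if i ∈ T then φ (t i p) else t i p) with hg
  have hφabs : ∀ x, |φ x| ≤ |x| := fun x => by simpa [hφ0] using hφ x 0
  have hterm : ∀ (T : Finset (Fin n)) (s : Fin n → Bool) (p : P) (i : Fin n),
      radSign (s i) * (if i ∈ T then φ (t i p) else t i p) ≤ 1 := by
    intro T s p i
    have habs : |radSign (s i) * (if i ∈ T then φ (t i p) else t i p)| ≤ 1 := by
      rw [abs_mul, radSign_abs, one_mul]
      split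
      · exact (hφabs _).trans (ht i p)
      · exact ht i p
    exact le_trans (le_abs_self _) habs
  have hgle : ∀ (T : Finset (Fin n)) (s : Fin n → Bool) (p : P), g T s p ≤ n := by
    intro T s p
    calc g T s p ≤ ∑ _i : Fin n, (1:ℝ) := Finset.sum_le_sum fun i _ => hterm T s p i
      _ = n := by simp
  have hbdd : ∀ (T : Finset (Fin n)) (s : Fin n → Bool), BddAbove (Set.range (g T s)) := fun T s => bdd_of_le _ n (hgle T s)
  have main : ∀ T : Finset (Fin n),
      ∑ s : Fin n → Bool, (⨆ p, g T s p) ≤ ∑ s : Fin n → Bool, (⨆ p, g ∅ s p) := by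
    intro T
    induction T using Finset.induction_on with
    | empty => exact le_refl _
    | @insert i₀ T hi0 ih =>
      refine le_trans ?_ ih
      set flip : (Fin n → Bool) → (Fin n → Bool) := fun s => Function.update s i₀ (!(s i₀))
        with hflip
      have hinv : Function.Involutive flip := by
        intro s; funext j
        by_cases hj : j = i₀
        · subst hj; simp [hflip]
        · simp [hflip, Function.update_of_ne hj]
      have hsum_flip : ∀ h : (Fin n → Bool) → ℝ, ∑ s, h (flip s) = ∑ s, h s :=
        fun h => hinv.bijective.sum_comp h
      set B : (Fin n → Bool) → P → ℝ :=
        fun s p => ∑ i ∈ Finset.univ.erase i₀,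
          radSign (s i) * (if i ∈ T then φ (t i p) else t i p) with hB
      have hdecT' : ∀ (s : Fin n → Bool) (p : P), g (insert i₀ T) s p = B s p + radSign (s i₀) * φ (t i₀ p) := by
        intro s p
        rw [hg, hB]
        simp only []
        rw [← Finset.add_sum_erase _ _ (Finset.mem_univ i₀), if_pos (Finset.mem_insert_self i₀ T),
          add_comm]
        congr 1
        refine Finset.sum_congr rfl fun i hi => ?_
        have hne : i ≠ i₀ := (Finset.mem_erase.mp hi).1
        simp [Finset.mem_insert, hne]
      have hdecT : ∀ (s : Fin n → Bool) (p : P), g T s p = B s p + radSign (s i₀) * t i₀ p := by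
        intro s p
        rw [hg, hB]
        simp only []
        rw [← Finset.add_sum_erase _ _ (Finset.mem_univ i₀), if_neg hi0, add_comm]
      have hBflip : ∀ (s : Fin n → Bool) (p : P), B (flip s) p = B s p := by
        intro s p
        refine Finset.sum_congr rfl fun i hi => ?_
        have hne : i ≠ i₀ := (Finset.mem_erase.mp hi).1
        simp [hflip, Function.update_of_ne hne]
      have hflip_i0 : ∀ s : Fin n → Bool, radSign (flip s i₀) = - radSign (s i₀) := by
        intro s; simp [hflip, radSign_not]
      have key : ∀ s, (⨆ p, g (insert i₀ T) s p) + (⨆ p, g (insert i₀ T) (flip s) p)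
          ≤ (⨆ p, g T s p) + (⨆ p, g T (flip s) p) := by
        intro s
        have e1 : ∀ p, g (insert i₀ T) s p = B s p + radSign (s i₀) * φ (t i₀ p) := hdecT' s
        have e2 : ∀ p, g (insert i₀ T) (flip s) p
            = B s p - radSign (s i₀) * φ (t i₀ p) := by
          intro p; rw [hdecT' (flip s) p, hBflip, hflip_i0]; ring
        have e3 : ∀ p, g T s p = B s p + radSign (s i₀) * t i₀ p := hdecT s
        have e4 : ∀ p, g T (flip s) p = B s p - radSign (s i₀) * t i₀ p := by
          intro p; rw [hdecT (flip s) p, hBflip, hflip_i0]; ring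
        have hbd1 : BddAbove (Set.range fun p => B s p + radSign (s i₀) * t i₀ p) := by
          simp only [← e3]; exact hbdd T s
        have hbd2 : BddAbove (Set.range fun p => B s p - radSign (s i₀) * t i₀ p) := by
          simp only [← e4]; exact hbdd T (flip s)
        simp only [e1, e2, e3, e4]
        exact sup_add_sup_le (B s) (t i₀) _ (radSign_choice _) φ hφ hbd1 hbd2
      have hsum : ∑ s : Fin n → Bool,
            ((⨆ p, g (insert i₀ T) s p) + (⨆ p, g (insert i₀ T) (flip s) p))
          ≤ ∑ s : Fin n → Bool, ((⨆ p, g T s p) + (⨆ p, g T (flip s) p)) :=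
        Finset.sum_le_sum fun s _ => key s
      rw [Finset.sum_add_distrib, Finset.sum_add_distrib,
        hsum_flip (fun s => ⨆ p, g (insert i₀ T) s p),
        hsum_flip (fun s => ⨆ p, g T s p)] at hsum
      linarith
  have h1 : ∀ s : Fin n → Bool,
      (⨆ p, ∑ i, radSign (s i) * φ (t i p)) = ⨆ p, g Finset.univ s p := by
    intro s; simp [hg]
  have h2 : ∀ s : Fin n → Bool,
      (⨆ p, ∑ i, radSign (s i) * t i p) = ⨆ p, g ∅ s p := by
    intro s; simp [hg]
  calc ∑ s : Fin n → Bool, (⨆ p, ∑ i, radSign (s i) * φ (t i p))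
      = ∑ s : Fin n → Bool, (⨆ p, g Finset.univ s p) := Finset.sum_congr rfl fun s _ => h1 s
    _ ≤ ∑ s : Fin n → Bool, (⨆ p, g ∅ s p) := main Finset.univ
    _ = ∑ s : Fin n → Bool, (⨆ p, ∑ i, radSign (s i) * t i p) :=
        (Finset.sum_congr rfl fun s _ => (h2 s)).symm

lemma avg_exp_le {n : ℕ} (c : Fin n → ℝ) :
    ∑ s : Fin n → Bool, Real.exp (∑ i, radSign (s i) * c i)
      ≤ 2 ^ n * Real.exp (∑ i, c i ^ 2 / 2) := by
  classical
  calc ∑ s : Fin n → Bool, Real.exp (∑ i, radSign (s i) * c i)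
      = ∑ s : Fin n → Bool, ∏ i, Real.exp (radSign (s i) * c i) :=
        Finset.sum_congr rfl fun s _ => Real.exp_sum _ _
    _ = ∏ i, ∑ b : Bool, Real.exp (radSign b * c i) := by
        rw [← Finset.sum_prod_piFinset (Finset.univ : Finset Bool)
          (fun i b => Real.exp (radSign b * c i)), Fintype.piFinset_univ]
    _ = ∏ i, 2 * Real.cosh (c i) := by
        refine Finset.prod_congr rfl fun i _ => ?_
        rw [Fintype.sum_bool, Real.cosh_eq]
        simp [radSign]
        ring
    _ ≤ ∏ i, 2 * Real.exp (c i ^ 2 / 2) :=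
        Finset.prod_le_prod (fun i _ => by positivity)
          (fun i _ => mul_le_mul_of_nonneg_left (Real.cosh_le_exp_half_sq _) (by norm_num))
    _ = 2 ^ n * Real.exp (∑ i, c i ^ 2 / 2) := by
        rw [Finset.prod_mul_distrib, Finset.prod_const, ← Real.exp_sum]
        simp

lemma massart {n d : ℕ} (hn : 0 < n) (hd : 0 < d) (x : Fin n → Fin d → ℝ)
    (hx : ∀ i j, |x i j| ≤ 1) :
    (1 / (2:ℝ)^n) * ∑ s : Fin n → Bool, (⨆ j : Fin d, |∑ i, radSign (s i) * x i j|)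
      ≤ n * Real.sqrt (2 * Real.log (2 * d) / n) := by
  classical
  haveI : Nonempty (Fin d) := ⟨⟨0, hd⟩⟩
  have hnpos : (0:ℝ) < n := by exact_mod_cast hn
  have hL : 0 < Real.log (2 * d) := by
    have h1 : (1:ℝ) ≤ d := by exact_mod_cast hd
    calc (0:ℝ) < Real.log 2 := Real.log_pos (by norm_num)
      _ ≤ Real.log (2 * d) := Real.log_le_log (by norm_num) (by nlinarith)
  set lam := Real.sqrt (2 * Real.log (2 * d) / n) with hlam
  have hlam_pos : 0 < lam := Real.sqrt_pos.mpr (by positivity)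
  have hlam_sq : lam ^ 2 = 2 * Real.log (2 * d) / n := Real.sq_sqrt (by positivity)
  set M : (Fin n → Bool) → ℝ := fun s => ⨆ j : Fin d, |∑ i, radSign (s i) * x i j| with hM
  set v : Fin d → (Fin n → Bool) → ℝ := fun j s => ∑ i, radSign (s i) * x i j with hv
  set N : ℝ := (2:ℝ)^n with hN
  have hNpos : (0:ℝ) < N := by positivity
  -- Jensen
  have hwsum : ∑ _s : Fin n → Bool, 1/N = 1 := by
    rw [Finset.sum_const, Finset.card_univ]
    simp [hN]
  have jensen : Real.exp (lam * ((1/N) * ∑ s : Fin n → Bool, M s))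
      ≤ (1/N) * ∑ s : Fin n → Bool, Real.exp (lam * M s) := by
    have hmain := convexOn_exp.map_sum_le (t := Finset.univ)
      (w := fun _ : Fin n → Bool => 1/N) (p := fun s => lam * M s)
      (fun _ _ => by positivity) hwsum (fun _ _ => Set.mem_univ _)
    have harg : ∑ s : Fin n → Bool, (1/N) • (lam * M s) = lam * ((1/N) * ∑ s : Fin n → Bool, M s) := by
      simp only [smul_eq_mul, ← Finset.mul_sum]
      ring
    rw [harg] at hmain
    refine hmain.trans (le_of_eq ?_)
    simp only [smul_eq_mul, ← Finset.mul_sum]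
  -- pointwise bound on exp (lam * M s)
  have step2 : ∀ s : Fin n → Bool, Real.exp (lam * M s)
      ≤ ∑ j : Fin d, (Real.exp (lam * v j s) + Real.exp (-(lam * v j s))) := by
    intro s
    obtain ⟨j0, hj0⟩ := Finite.exists_max fun j : Fin d => |v j s|
    have hMle : M s ≤ |v j0 s| := ciSup_le hj0
    have h1 : Real.exp (lam * M s) ≤ Real.exp (lam * |v j0 s|) :=
      Real.exp_le_exp.mpr (mul_le_mul_of_nonneg_left hMle hlam_pos.le)
    have h2 : Real.exp (lam * |v j0 s|)
        ≤ Real.exp (lam * v j0 s) + Real.exp (-(lam * v j0 s)) := by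
      rcases abs_cases (v j0 s) with ⟨h, _⟩ | ⟨h, _⟩
      · rw [h]; nlinarith [Real.exp_pos (-(lam * v j0 s))]
      · rw [h, mul_neg]; nlinarith [Real.exp_pos (lam * v j0 s)]
    refine (h1.trans h2).trans ?_
    exact Finset.single_le_sum
      (f := fun j => Real.exp (lam * v j s) + Real.exp (-(lam * v j s)))
      (fun j _ => by positivity) (Finset.mem_univ j0)
  -- per-coordinate mgf bound
  have step3 : ∀ c : Fin n → ℝ, (∀ i, |c i| ≤ 1) →
      ∑ s : Fin n → Bool, Real.exp (∑ i, radSign (s i) * (lam * c i))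
        ≤ N * Real.exp (n * lam ^ 2 / 2) := by
    intro c hc
    refine (avg_exp_le fun i => lam * c i).trans ?_
    have hsum : ∑ i, (lam * c i) ^ 2 / 2 ≤ n * lam ^ 2 / 2 := by
      calc ∑ i, (lam * c i) ^ 2 / 2 ≤ ∑ _i : Fin n, lam ^ 2 / 2 :=
            Finset.sum_le_sum fun i _ => by
              have hc2 : c i ^ 2 ≤ 1 := by nlinarith [abs_le.mp (hc i)]
              nlinarith [sq_nonneg lam]
        _ = n * lam ^ 2 / 2 := by rw [Finset.sum_const, Finset.card_univ]; simp; ring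
    exact mul_le_mul_of_nonneg_left (Real.exp_le_exp.mpr hsum) (by positivity)
  have hrw1 : ∀ (j : Fin d) (s : Fin n → Bool),
      lam * v j s = ∑ i, radSign (s i) * (lam * x i j) := by
    intro j s
    rw [hv]
    simp only []
    rw [Finset.mul_sum]
    exact Finset.sum_congr rfl fun i _ => by ring
  have hrw2 : ∀ (j : Fin d) (s : Fin n → Bool),
      -(lam * v j s) = ∑ i, radSign (s i) * (lam * (-(x i j))) := by
    intro j s
    rw [hv]
    simp only []
    rw [Finset.mul_sum, ← Finset.sum_neg_distrib]
    exact Finset.sum_congr rfl fun i _ => by ring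
  have combine : (1/N) * ∑ s : Fin n → Bool, Real.exp (lam * M s)
      ≤ 2 * d * Real.exp (n * lam ^ 2 / 2) := by
    have h1 : ∑ s : Fin n → Bool, Real.exp (lam * M s)
        ≤ ∑ s : Fin n → Bool, ∑ j : Fin d,
            (Real.exp (lam * v j s) + Real.exp (-(lam * v j s))) :=
      Finset.sum_le_sum fun s _ => step2 s
    rw [Finset.sum_comm] at h1
    have h2 : ∑ j : Fin d, ∑ s : Fin n → Bool,
        (Real.exp (lam * v j s) + Real.exp (-(lam * v j s)))
        ≤ ∑ _j : Fin d, (N * Real.exp (n * lam ^ 2 / 2) + N * Real.exp (n * lam ^ 2 / 2)) := by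
      refine Finset.sum_le_sum fun j _ => ?_
      rw [Finset.sum_add_distrib]
      refine add_le_add ?_ ?_
      · calc ∑ s : Fin n → Bool, Real.exp (lam * v j s)
            = ∑ s : Fin n → Bool, Real.exp (∑ i, radSign (s i) * (lam * x i j)) := by
              exact Finset.sum_congr rfl fun s _ => by rw [hrw1]
          _ ≤ N * Real.exp (n * lam ^ 2 / 2) := step3 _ fun i => hx i j
      · calc ∑ s : Fin n → Bool, Real.exp (-(lam * v j s))
            = ∑ s : Fin n → Bool, Real.exp (∑ i, radSign (s i) * (lam * (-(x i j)))) := by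
              exact Finset.sum_congr rfl fun s _ => by rw [hrw2]
          _ ≤ N * Real.exp (n * lam ^ 2 / 2) := step3 _ fun i => by
              rw [abs_neg]; exact hx i j
    have h3 := h1.trans h2
    rw [Finset.sum_const, Finset.card_univ] at h3
    have : (1/N) * ∑ s : Fin n → Bool, Real.exp (lam * M s)
        ≤ (1/N) * (Fintype.card (Fin d) •
            (N * Real.exp (n * lam ^ 2 / 2) + N * Real.exp (n * lam ^ 2 / 2))) :=
      mul_le_mul_of_nonneg_left h3 (by positivity)
    refine this.trans (le_of_eq ?_)
    simp [nsmul_eq_mul]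
    field_simp
    ring
  have hexp_eq : 2 * d * Real.exp (n * lam ^ 2 / 2) = Real.exp (2 * Real.log (2 * d)) := by
    have harg : n * lam ^ 2 / 2 = Real.log (2 * d) := by
      rw [hlam_sq]; field_simp
    have h2d : Real.exp (Real.log (2 * d)) = 2 * d := Real.exp_log (by positivity)
    rw [harg, show (2:ℝ) * Real.log (2*(d:ℝ)) = Real.log (2*(d:ℝ)) + Real.log (2*(d:ℝ)) by ring,
      Real.exp_add, h2d]
  have hfin : Real.exp (lam * ((1/N) * ∑ s : Fin n → Bool, M s))
      ≤ Real.exp (2 * Real.log (2 * d)) := by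
    rw [← hexp_eq]; exact jensen.trans combine
  have hfin2 : lam * ((1/N) * ∑ s : Fin n → Bool, M s) ≤ 2 * Real.log (2 * d) :=
    Real.exp_le_exp.mp hfin
  have hlam2 : lam * (n * lam) = 2 * Real.log (2 * d) := by
    have : lam * (n * lam) = n * lam ^ 2 := by ring
    rw [this, hlam_sq]; field_simp
  rw [hM] at hfin2
  rw [hN] at hfin2
  nlinarith [hfin2, hlam_pos]


/-- Rademacher complexity bound for the class of width-`m` two-layer ReLU networks
with path norm at most `Q`, over a sample `S ⊆ [-1,1]^d` of size `n`:
`R_n(F_Q ∘ S) ≤ 2Q √(2 ln(2d)/n)`. The expectation over the i.i.d. uniform signs is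
written as the average over all `2ⁿ` sign patterns. -/
theorem radComplexity_path_norm_class
    (d n m : ℕ) (hd : 0 < d) (hn : 0 < n)
    (Q : ℝ) (hQ : 0 ≤ Q)
    (S : Fin n → Fin d → ℝ) (hS : ∀ i j, |S i j| ≤ 1) :
    (1 / (n : ℝ)) *
        ((1 / (2 : ℝ) ^ n) *
          ∑ s : Fin n → Bool,
            sSup {v : ℝ | ∃ (A : Fin m → ℝ) (W : Fin m → Fin d → ℝ),
              (∑ k, |A k| * ∑ j, |W k j|) ≤ Q ∧
              v = ∑ i, radSign (s i) * ∑ k, A k * max (∑ j, W k j * S i j) 0})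
      ≤ 2 * Q * Real.sqrt (2 * Real.log (2 * d) / n) := by
  classical
  haveI : Nonempty (Fin d) := ⟨⟨0, hd⟩⟩
  set P := {w : Fin d → ℝ // ∑ j, |w j| ≤ 1} with hP
  haveI : Nonempty P := ⟨⟨0, by simp⟩⟩
  set t : Fin n → P → ℝ := fun i p => ∑ j, p.1 j * S i j with htdef
  have ht : ∀ (i : Fin n) (p : P), |t i p| ≤ 1 := by
    intro i p
    calc |t i p| ≤ ∑ j, |p.1 j * S i j| := Finset.abs_sum_le_sum_abs _ _
      _ ≤ ∑ j, |p.1 j| := Finset.sum_le_sum fun j _ => by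
          rw [abs_mul]
          exact mul_le_of_le_one_right (abs_nonneg _) (hS i j)
      _ ≤ 1 := p.2
  have hrelu_lip : ∀ a b : ℝ, |max a 0 - max b 0| ≤ |a - b| :=
    fun a b => abs_max_sub_max_le_abs a b 0
  set K : (Fin n → Bool) → ℝ := fun s => ⨆ p : P, ∑ i, radSign (s i) * max (t i p) 0 with hK
  set Lf : (Fin n → Bool) → ℝ := fun s => ⨆ p : P, ∑ i, radSign (s i) * t i p with hLf
  set Mf : (Fin n → Bool) → ℝ := fun s => ⨆ j : Fin d, |∑ i, radSign (s i) * S i j| with hMf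
  -- boundedness
  have htermK : ∀ (s : Fin n → Bool) (p : P) (i : Fin n),
      radSign (s i) * max (t i p) 0 ≤ 1 := by
    intro s p i
    have : |radSign (s i) * max (t i p) 0| ≤ 1 := by
      rw [abs_mul, radSign_abs, one_mul]
      have := hrelu_lip (t i p) 0
      simp only [sub_zero, max_self] at this
      exact this.trans (ht i p)
    exact (le_abs_self _).trans this
  have hbddK : ∀ s : Fin n → Bool,
      BddAbove (Set.range fun p : P => ∑ i, radSign (s i) * max (t i p) 0) := by
    intro s
    refine bdd_of_le _ n fun p => ?_
    calc ∑ i, radSign (s i) * max (t i p) 0 ≤ ∑ _i : Fin n, (1:ℝ) :=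
          Finset.sum_le_sum fun i _ => htermK s p i
      _ = n := by simp
  have hK0 : ∀ s : Fin n → Bool, 0 ≤ K s := by
    intro s
    have h0 : (∑ i, radSign (s i) * max (t i ⟨0, by simp⟩) 0) = 0 := by
      apply Finset.sum_eq_zero
      intro i _
      simp [htdef]
    have := le_ciSup (hbddK s) (⟨0, by simp⟩ : P)
    rw [h0] at this
    exact this
  -- flip sum identity
  have hKflipsum : ∑ s : Fin n → Bool, K (fun i => !(s i)) = ∑ s : Fin n → Bool, K s := by
    have hinv : Function.Involutive (fun s : Fin n → Bool => (fun i => !(s i))) := by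
      intro s; funext i; simp
    exact hinv.bijective.sum_comp K
  -- (a) reduce the network class to Q * (K s + K s̄)
  have hGle : ∀ s : Fin n → Bool,
      sSup {v : ℝ | ∃ (A : Fin m → ℝ) (W : Fin m → Fin d → ℝ),
              (∑ k, |A k| * ∑ j, |W k j|) ≤ Q ∧
              v = ∑ i, radSign (s i) * ∑ k, A k * max (∑ j, W k j * S i j) 0}
        ≤ Q * (K s + K (fun i => !(s i))) := by
    intro s
    have hKK : 0 ≤ K s + K (fun i => !(s i)) := add_nonneg (hK0 s) (hK0 _)
    refine Real.sSup_le ?_ (mul_nonneg hQ hKK)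
    rintro v ⟨A, W, hAW, rfl⟩
    have hswap : ∑ i, radSign (s i) * ∑ k, A k * max (∑ j, W k j * S i j) 0
        = ∑ k, A k * ∑ i, radSign (s i) * max (∑ j, W k j * S i j) 0 := by
      calc ∑ i, radSign (s i) * ∑ k, A k * max (∑ j, W k j * S i j) 0
          = ∑ i, ∑ k, radSign (s i) * (A k * max (∑ j, W k j * S i j) 0) :=
            Finset.sum_congr rfl fun i _ => Finset.mul_sum _ _ _
        _ = ∑ k, ∑ i, radSign (s i) * (A k * max (∑ j, W k j * S i j) 0) := Finset.sum_comm
        _ = ∑ k, A k * ∑ i, radSign (s i) * max (∑ j, W k j * S i j) 0 := by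
            refine Finset.sum_congr rfl fun k _ => ?_
            rw [Finset.mul_sum]
            exact Finset.sum_congr rfl fun i _ => by ring
    rw [hswap]
    have hkbound : ∀ k : Fin m,
        A k * ∑ i, radSign (s i) * max (∑ j, W k j * S i j) 0
          ≤ |A k| * (∑ j, |W k j|) * (K s + K (fun i => !(s i))) := by
      intro k
      set ρ : ℝ := ∑ j, |W k j| with hρ
      have hρ0 : 0 ≤ ρ := Finset.sum_nonneg fun j _ => abs_nonneg _
      rcases eq_or_lt_of_le hρ0 with hz | hpos
      · -- all weights zero
        have hW0 : ∀ j, W k j = 0 := by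
          intro j
          have := (Finset.sum_eq_zero_iff_of_nonneg
            (fun j _ => abs_nonneg (W k j))).mp hz.symm j (Finset.mem_univ j)
          exact abs_eq_zero.mp this
        have : ∑ i, radSign (s i) * max (∑ j, W k j * S i j) 0 = 0 := by
          apply Finset.sum_eq_zero
          intro i _
          simp [hW0]
        rw [this, ← hz]
        simp
      · -- normalize
        set u : P := ⟨fun j => W k j / ρ, by
          have habs : ∀ j ∈ Finset.univ, |W k j / ρ| = |W k j| / ρ := fun j _ => by
            rw [abs_div, abs_of_pos hpos]
          rw [Finset.sum_congr rfl habs, ← Finset.sum_div, ← hρ, div_self hpos.ne']⟩ with hu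
        have hmax : ∀ i : Fin n, max (∑ j, W k j * S i j) 0 = ρ * max (t i u) 0 := by
          intro i
          have h1 : ∑ j, W k j * S i j = ρ * t i u := by
            rw [htdef]
            simp only [hu]
            rw [Finset.mul_sum]
            refine Finset.sum_congr rfl fun j _ => ?_
            field_simp
          rw [h1, mul_max_of_nonneg _ _ hρ0, mul_zero]
        set cu := ∑ i, radSign (s i) * max (t i u) 0 with hcu
        have hck : ∑ i, radSign (s i) * max (∑ j, W k j * S i j) 0 = ρ * cu := by
          rw [hcu, Finset.mul_sum]
          exact Finset.sum_congr rfl fun i _ => by rw [hmax i]; ring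
        have hcu_le : cu ≤ K s := le_ciSup (hbddK s) u
        have hncu_le : -cu ≤ K (fun i => !(s i)) := by
          have hne : -cu = ∑ i, radSign (!(s i)) * max (t i u) 0 := by
            rw [hcu, ← Finset.sum_neg_distrib]
            exact Finset.sum_congr rfl fun i _ => by rw [radSign_not]; ring
          rw [hne]
          exact le_ciSup (hbddK (fun i => !(s i))) u
        rw [hck]
        have habs2 : |cu| ≤ K s + K (fun i => !(s i)) := by
          rw [abs_le]
          constructor
          · linarith [hncu_le, hK0 s]
          · linarith [hcu_le, hK0 (fun i => !(s i))]
        calc A k * (ρ * cu) ≤ |A k * (ρ * cu)| := le_abs_self _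
          _ = |A k| * (ρ * |cu|) := by rw [abs_mul, abs_mul, abs_of_nonneg hρ0]
          _ ≤ |A k| * (ρ * (K s + K (fun i => !(s i)))) :=
              mul_le_mul_of_nonneg_left (mul_le_mul_of_nonneg_left habs2 hρ0) (abs_nonneg _)
          _ = |A k| * ρ * (K s + K (fun i => !(s i))) := by ring
    calc ∑ k, A k * ∑ i, radSign (s i) * max (∑ j, W k j * S i j) 0
        ≤ ∑ k, |A k| * (∑ j, |W k j|) * (K s + K (fun i => !(s i))) :=
          Finset.sum_le_sum fun k _ => hkbound k
      _ = (∑ k, |A k| * ∑ j, |W k j|) * (K s + K (fun i => !(s i))) := by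
          rw [Finset.sum_mul]
      _ ≤ Q * (K s + K (fun i => !(s i))) := mul_le_mul_of_nonneg_right hAW hKK
  -- (b) contraction
  have hcontr : ∑ s : Fin n → Bool, K s ≤ ∑ s : Fin n → Bool, Lf s := by
    rw [hK, hLf]
    exact contraction t ht (fun a => max a 0) (by simp) hrelu_lip
  -- (c) linear sup is at most the sup-norm of the coordinate sums
  have hLM : ∀ s : Fin n → Bool, Lf s ≤ Mf s := by
    intro s
    have hbddM : BddAbove (Set.range fun j : Fin d => |∑ i, radSign (s i) * S i j|) :=
      (Set.finite_range _).bddAbove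
    have hM0 : 0 ≤ Mf s := le_trans (abs_nonneg _) (le_ciSup hbddM ⟨0, hd⟩)
    rw [hLf]
    refine ciSup_le fun p => ?_
    have hswap : ∑ i, radSign (s i) * t i p = ∑ j, p.1 j * ∑ i, radSign (s i) * S i j := by
      rw [htdef]
      simp only []
      calc ∑ i, radSign (s i) * ∑ j, p.1 j * S i j
          = ∑ i, ∑ j, radSign (s i) * (p.1 j * S i j) :=
            Finset.sum_congr rfl fun i _ => Finset.mul_sum _ _ _
        _ = ∑ j, ∑ i, radSign (s i) * (p.1 j * S i j) := Finset.sum_comm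
        _ = ∑ j, p.1 j * ∑ i, radSign (s i) * S i j := by
            refine Finset.sum_congr rfl fun j _ => ?_
            rw [Finset.mul_sum]
            exact Finset.sum_congr rfl fun i _ => by ring
    rw [hswap]
    calc ∑ j, p.1 j * ∑ i, radSign (s i) * S i j
        ≤ ∑ j, |p.1 j| * Mf s := by
          refine Finset.sum_le_sum fun j _ => ?_
          have h1 : |∑ i, radSign (s i) * S i j| ≤ Mf s := le_ciSup hbddM j
          calc p.1 j * ∑ i, radSign (s i) * S i j
              ≤ |p.1 j * ∑ i, radSign (s i) * S i j| := le_abs_self _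
            _ = |p.1 j| * |∑ i, radSign (s i) * S i j| := abs_mul _ _
            _ ≤ |p.1 j| * Mf s := mul_le_mul_of_nonneg_left h1 (abs_nonneg _)
      _ = (∑ j, |p.1 j|) * Mf s := (Finset.sum_mul _ _ _).symm
      _ ≤ 1 * Mf s := mul_le_mul_of_nonneg_right p.2 hM0
      _ = Mf s := one_mul _
  -- (d) Massart
  have hmas : (1 / (2:ℝ)^n) * ∑ s : Fin n → Bool, Mf s
      ≤ n * Real.sqrt (2 * Real.log (2 * d) / n) := by
    rw [hMf]
    exact massart hn hd S hS
  -- assembly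
  have hchain : ∑ s : Fin n → Bool, sSup {v : ℝ | ∃ (A : Fin m → ℝ) (W : Fin m → Fin d → ℝ),
              (∑ k, |A k| * ∑ j, |W k j|) ≤ Q ∧
              v = ∑ i, radSign (s i) * ∑ k, A k * max (∑ j, W k j * S i j) 0}
      ≤ 2 * Q * ∑ s : Fin n → Bool, Mf s := by
    calc ∑ s : Fin n → Bool, sSup {v : ℝ | ∃ (A : Fin m → ℝ) (W : Fin m → Fin d → ℝ),
              (∑ k, |A k| * ∑ j, |W k j|) ≤ Q ∧
              v = ∑ i, radSign (s i) * ∑ k, A k * max (∑ j, W k j * S i j) 0}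
        ≤ ∑ s : Fin n → Bool, Q * (K s + K (fun i => !(s i))) :=
          Finset.sum_le_sum fun s _ => hGle s
      _ = 2 * Q * ∑ s : Fin n → Bool, K s := by
          rw [← Finset.mul_sum, Finset.sum_add_distrib, hKflipsum]; ring
      _ ≤ 2 * Q * ∑ s : Fin n → Bool, Lf s :=
          mul_le_mul_of_nonneg_left hcontr (by positivity)
      _ ≤ 2 * Q * ∑ s : Fin n → Bool, Mf s :=
          mul_le_mul_of_nonneg_left (Finset.sum_le_sum fun s _ => hLM s) (by positivity)
  have hnpos : (0:ℝ) < n := by exact_mod_cast hn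
  have hmain2 : (1/(2:ℝ)^n) * ∑ s : Fin n → Bool, sSup {v : ℝ | ∃ (A : Fin m → ℝ) (W : Fin m → Fin d → ℝ),
              (∑ k, |A k| * ∑ j, |W k j|) ≤ Q ∧
              v = ∑ i, radSign (s i) * ∑ k, A k * max (∑ j, W k j * S i j) 0}
      ≤ (1/(2:ℝ)^n) * (2 * Q * ∑ s : Fin n → Bool, Mf s) :=
    mul_le_mul_of_nonneg_left hchain (by positivity)
  have h3 : (1/(2:ℝ)^n) * (2 * Q * ∑ s : Fin n → Bool, Mf s)
      ≤ 2 * Q * ((n:ℝ) * Real.sqrt (2 * Real.log (2 * d) / n)) := by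
    have h5 := mul_le_mul_of_nonneg_left hmas (show (0:ℝ) ≤ 2 * Q by positivity)
    calc (1/(2:ℝ)^n) * (2 * Q * ∑ s : Fin n → Bool, Mf s)
        = 2 * Q * ((1/(2:ℝ)^n) * ∑ s : Fin n → Bool, Mf s) := by ring
      _ ≤ _ := h5
  have h4 := hmain2.trans h3
  calc (1 / (n : ℝ)) * ((1 / (2 : ℝ) ^ n) * ∑ s : Fin n → Bool, sSup {v : ℝ | ∃ (A : Fin m → ℝ) (W : Fin m → Fin d → ℝ),
              (∑ k, |A k| * ∑ j, |W k j|) ≤ Q ∧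
              v = ∑ i, radSign (s i) * ∑ k, A k * max (∑ j, W k j * S i j) 0})
      ≤ (1/(n:ℝ)) * (2 * Q * ((n:ℝ) * Real.sqrt (2 * Real.log (2 * d) / n))) :=
        mul_le_mul_of_nonneg_left h4 (by positivity)
    _ = 2 * Q * Real.sqrt (2 * Real.log (2 * d) / n) := by
        field_simp
end
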